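/- For any finite family of words w₁, …, wₙ over S (n ≥ 1), there exists a word w over S such that w₁S ∩ w₂S ∩ ⋯ ∩ wₙS = wS. In particular, the family of constructible right ideals {wS : w a word over S} ∪ {∅} is closed under finite intersections. -/

import Mathlib

def wordAct {G : Type*} [Group G] (S : Set G) : List (G × Bool) → Set G → Set G
  | [], X => X
  | l :: w, X =>
    if l.2 then (fun x => l.1 * x) '' wordAct S w X
    else {q | q ∈ S ∧ l.1 * q ∈ wordAct S w X}

def constructibleIdeals {G : Type*} [Group G] (S : Submonoid G) : Set (Set G) :=
  {X | X = ∅ ∨ ∃ w : List (G × Bool), (∀ l ∈ w, l.1 ∈ S) ∧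
    X = wordAct (S : Set G) w (S : Set G)}

namespace WordAux

variable {G : Type*} [Group G] (S : Submonoid G)

def winv (w : List (G × Bool)) : List (G × Bool) :=
  (w.map (fun l => (l.1, !l.2))).reverse

lemma winv_cons (l : G × Bool) (w : List (G × Bool)) :
    winv (l :: w) = winv w ++ [(l.1, !l.2)] := by simp [winv]

lemma winv_mem {w : List (G × Bool)} (hw : ∀ l ∈ w, l.1 ∈ S) :
    ∀ l ∈ winv w, l.1 ∈ S := by
  intro l hl
  simp only [winv, List.mem_reverse, List.mem_map] at hl
  obtain ⟨a, ha, rfl⟩ := hl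
  exact hw a ha

lemma wordAct_append (a b : List (G × Bool)) (X : Set G) :
    wordAct (S : Set G) (a ++ b) X = wordAct (S : Set G) a (wordAct (S : Set G) b X) := by
  induction a with
  | nil => rfl
  | cons l a ih => simp [wordAct, ih]

lemma wordAct_subset {w : List (G × Bool)} (hw : ∀ l ∈ w, l.1 ∈ S)
    {X : Set G} (hX : X ⊆ S) : wordAct (S : Set G) w X ⊆ (S : Set G) := by
  induction w with
  | nil => exact hX
  | cons l w ih =>
    have ih' := ih (fun l hl => hw l (List.mem_cons_of_mem _ hl))
    intro x hx
    by_cases h : l.2 <;> simp only [wordAct, h, if_true, if_false] at hx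
    · obtain ⟨y, hy, rfl⟩ := hx
      exact S.mul_mem (hw l (List.mem_cons_self)) (ih' hy)
    · exact hx.1

lemma cons_pos (T : Set G) (p : G) (w : List (G × Bool)) (X : Set G) :
    wordAct T ((p, true) :: w) X = (fun x => p * x) '' wordAct T w X := by
  simp [wordAct]

lemma cons_neg (T : Set G) (p : G) (w : List (G × Bool)) (X : Set G) :
    wordAct T ((p, false) :: w) X = {q | q ∈ T ∧ p * q ∈ wordAct T w X} := by
  simp [wordAct]

lemma key {w : List (G × Bool)} (hw : ∀ l ∈ w, l.1 ∈ S)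
    {X : Set G} (hX : X ⊆ S) :
    wordAct (S : Set G) w (wordAct (S : Set G) (winv w) X) =
      wordAct (S : Set G) w (S : Set G) ∩ X := by
  induction w generalizing X with
  | nil =>
    simp only [winv, List.map_nil, List.reverse_nil, wordAct]
    exact (Set.inter_eq_right.mpr hX).symm
  | cons l w ih =>
    obtain ⟨p, ε⟩ := l
    have hl : p ∈ S := hw (p, ε) (List.mem_cons_self)
    have hw' : ∀ a ∈ w, a.1 ∈ S := fun a ha => hw a (List.mem_cons_of_mem _ ha)
    have hwS : wordAct (S : Set G) w (S : Set G) ⊆ (S : Set G) :=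
      wordAct_subset S hw' le_rfl
    rw [winv_cons, wordAct_append]
    cases ε
    · -- negative letter
      simp only [Bool.not_false]
      rw [cons_neg, cons_neg, cons_pos _ p ([] : List (G × Bool))]
      have hX' : ((fun x => p * x) '' wordAct (S : Set G) [] X) ⊆ (S : Set G) := by
        rintro q ⟨y, hy, rfl⟩
        exact S.mul_mem hl (hX hy)
      rw [ih hw' hX']
      ext x
      constructor
      · rintro ⟨hxS, hx1, y, hy, hxy⟩
        have : y = x := mul_left_cancel hxy
        subst this
        exact ⟨⟨hxS, hx1⟩, hy⟩
      · rintro ⟨⟨hxS, hx1⟩, hx⟩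
        exact ⟨hxS, hx1, x, hx, rfl⟩
    · -- positive letter
      simp only [Bool.not_true]
      rw [cons_pos, cons_pos, cons_neg _ p ([] : List (G × Bool))]
      have hX' : {q | q ∈ (S : Set G) ∧ p * q ∈ wordAct (S : Set G) [] X} ⊆ (S : Set G) :=
        fun q hq => hq.1
      rw [ih hw' hX']
      ext x
      constructor
      · rintro ⟨y, ⟨hy1, _, hy3⟩, rfl⟩
        exact ⟨⟨y, hy1, rfl⟩, hy3⟩
      · rintro ⟨⟨y, hy1, rfl⟩, hx⟩
        exact ⟨y, ⟨hy1, hwS hy1, hx⟩, rfl⟩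

lemma pair {w₁ w₂ : List (G × Bool)} (h1 : ∀ l ∈ w₁, l.1 ∈ S)
    (h2 : ∀ l ∈ w₂, l.1 ∈ S) :
    wordAct (S : Set G) (w₁ ++ winv w₁ ++ w₂) (S : Set G) =
      wordAct (S : Set G) w₁ (S : Set G) ∩ wordAct (S : Set G) w₂ (S : Set G) := by
  rw [wordAct_append, wordAct_append]
  exact key S h1 (wordAct_subset S h2 le_rfl)

lemma pair_mem {w₁ w₂ : List (G × Bool)} (h1 : ∀ l ∈ w₁, l.1 ∈ S)
    (h2 : ∀ l ∈ w₂, l.1 ∈ S) : ∀ l ∈ w₁ ++ winv w₁ ++ w₂, l.1 ∈ S := by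
  intro l hl
  simp only [List.mem_append] at hl
  rcases hl with (hl | hl) | hl
  · exact h1 l hl
  · exact winv_mem S h1 l hl
  · exact h2 l hl

end WordAux

theorem word_iInter_act {G : Type*} [Group G] (S : Submonoid G) :
    (∀ (n : ℕ), 1 ≤ n → ∀ ws : Fin n → List (G × Bool),
      (∀ i, ∀ l ∈ ws i, l.1 ∈ S) →
      ∃ w : List (G × Bool), (∀ l ∈ w, l.1 ∈ S) ∧
        (⋂ i, wordAct (S : Set G) (ws i) (S : Set G)) =
          wordAct (S : Set G) w (S : Set G)) ∧
    (∀ A ∈ constructibleIdeals S, ∀ B ∈ constructibleIdeals S,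
      A ∩ B ∈ constructibleIdeals S) := by
  constructor
  · intro n
    induction n with
    | zero => omega
    | succ n ih =>
      intro _ ws hws
      rcases Nat.eq_zero_or_pos n with rfl | hn
      · refine ⟨ws 0, hws 0, ?_⟩
        ext x
        simp [Set.mem_iInter, Fin.forall_fin_one]
      · obtain ⟨w', hw', heq⟩ := ih hn (fun i => ws i.succ) (fun i => hws i.succ)
        refine ⟨ws 0 ++ WordAux.winv (ws 0) ++ w',
          WordAux.pair_mem S (hws 0) hw', ?_⟩
        rw [WordAux.pair S (hws 0) hw', ← heq]
        ext x
        simp only [Set.mem_iInter, Set.mem_inter_iff, Fin.forall_fin_succ]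
  · intro A hA B hB
    rcases hA with rfl | ⟨w₁, hw₁, rfl⟩
    · left; simp
    rcases hB with rfl | ⟨w₂, hw₂, rfl⟩
    · left; simp
    exact Or.inr ⟨_, WordAux.pair_mem S hw₁ hw₂, (WordAux.pair S hw₁ hw₂).symm⟩
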